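/- Let m be a BPA on a finite frame Θ = {x_1,…,x_n} with belief function Bel, and let π be a permutation of {1,…,n}. Then the probability P^π defined by P^π(x_{π(i)}) = ∑ { m(A) : x_{π(i)} ∈ A, x_{π(j)} ∉ A for j < i } is consistent with Bel, i.e., P^π(A) ≥ Bel(A) for all A ⊆ Θ. -/

import Mathlib

open Finset

theorem stmt_5 {Θ : Type*} [DecidableEq Θ] {n : ℕ} [Fintype Θ] [Nonempty Θ]
    (e : Fin n ≃ Θ)
    (m : Finset Θ → ℝ)
    (h0 : m ∅ = 0) (hnn : ∀ A, 0 ≤ m A)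
    (hsum : ∑ A : Finset Θ, m A = 1)
    (Bel : Finset Θ → ℝ)
    (hBel : ∀ A, Bel A = ∑ B ∈ A.powerset, m B)
    (π : Equiv.Perm (Fin n))
    (P : Fin n → ℝ)
    (hP : ∀ i, P i = ∑ A ∈ Finset.univ.filter
        (fun A : Finset Θ => e (π i) ∈ A ∧ ∀ j : Fin n, j < i → e (π j) ∉ A), m A) :
    ∀ A : Finset Θ, Bel A ≤ ∑ i ∈ Finset.univ.filter (fun i : Fin n => e (π i) ∈ A), P i := by
  intro A
  set f : Fin n → Finset (Finset Θ) := fun i => Finset.univ.filter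
      (fun B : Finset Θ => e (π i) ∈ B ∧ ∀ j : Fin n, j < i → e (π j) ∉ B) with hf
  have hdisj : ((Finset.univ.filter (fun i : Fin n => e (π i) ∈ A) : Finset (Fin n)) : Set (Fin n)).PairwiseDisjoint f := by
    intro i _ j _ hij
    simp only [Finset.disjoint_left, hf, Finset.mem_filter]
    rintro B ⟨-, hiB, hilt⟩ ⟨-, hjB, hjlt⟩
    rcases lt_or_gt_of_ne hij with h | h
    · exact hjlt i h hiB
    · exact hilt j h hjB
  have hrhs : ∑ i ∈ Finset.univ.filter (fun i : Fin n => e (π i) ∈ A), P i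
      = ∑ B ∈ (Finset.univ.filter (fun i : Fin n => e (π i) ∈ A)).biUnion f, m B := by
    rw [Finset.sum_biUnion hdisj]
    exact Finset.sum_congr rfl fun i _ => hP i
  rw [hBel, hrhs]
  have hzero : ∑ B ∈ A.powerset, m B = ∑ B ∈ A.powerset.erase ∅, m B := by
    rw [Finset.sum_erase _ h0]
  rw [hzero]
  apply Finset.sum_le_sum_of_subset_of_nonneg
  · intro B hB
    simp only [Finset.mem_erase, Finset.mem_powerset] at hB
    obtain ⟨hBne, hBA⟩ := hB
    have hBnonempty : B.Nonempty := Finset.nonempty_iff_ne_empty.mpr hBne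
    obtain ⟨x, hx⟩ := hBnonempty
    set T : Finset (Fin n) := Finset.univ.filter (fun i : Fin n => e (π i) ∈ B) with hT
    have hTne : T.Nonempty := ⟨π.symm (e.symm x), by simp [hT, hx]⟩
    set i := T.min' hTne with hi
    have hiT : i ∈ T := T.min'_mem hTne
    simp only [hT, Finset.mem_filter] at hiT
    apply Finset.mem_biUnion.mpr
    refine ⟨i, ?_, ?_⟩
    · simp only [Finset.mem_filter, Finset.mem_univ, true_and]
      exact hBA hiT.2
    · simp only [hf, Finset.mem_filter, Finset.mem_univ, true_and]
      refine ⟨hiT.2, fun j hj hjB => ?_⟩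
      have : i ≤ j := T.min'_le j (by simp [hT, hjB])
      exact absurd hj (not_lt.mpr this)
  · intro B _ _
    exact hnn B
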